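/- Fix λ ∈ ℝ and A ∈ ℝ³, set x = λ·A₃, and assume sin(x/2) ≠ 0. Define Ã₁ = (sin x / x)·A₁ − (2·sin²(x/2)/x)·A₂, Ã₂ = (sin x / x)·A₂ + (2·sin²(x/2)/x)·A₁, and Ã₃ = A₃. Then A₁ = (x/2)·cot(x/2)·Ã₁ + (x/2)·Ã₂ and A₂ = (x/2)·cot(x/2)·Ã₂ − (x/2)·Ã₁; i.e., the λ-Minkowski Seiberg–Witten field redefinition Ã(A) is inverted by the stated formulas (note Ã₃ = A₃, so x = λ·Ã₃). -/

import Mathlib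

/-- λ-Minkowski Seiberg–Witten map. With `x = λ A₃` and `sin(x/2) ≠ 0`,
setting `Ã₁ = (sin x / x) A₁ − (2 sin²(x/2)/x) A₂`, `Ã₂ = (sin x / x) A₂ + (2 sin²(x/2)/x) A₁`,
`Ã₃ = A₃`, one has `A₁ = (x/2)cot(x/2) Ã₁ + (x/2) Ã₂` and `A₂ = (x/2)cot(x/2) Ã₂ − (x/2) Ã₁`. -/
theorem lambda_minkowski_SW_map_inverse (lam : ℝ) (A : Fin 3 → ℝ)
    (h : Real.sin (lam * A 2 / 2) ≠ 0)
    (At : Fin 3 → ℝ)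
    (h1 : At 0 = (Real.sin (lam * A 2) / (lam * A 2)) * A 0
        - (2 * (Real.sin (lam * A 2 / 2)) ^ 2 / (lam * A 2)) * A 1)
    (h2 : At 1 = (Real.sin (lam * A 2) / (lam * A 2)) * A 1
        + (2 * (Real.sin (lam * A 2 / 2)) ^ 2 / (lam * A 2)) * A 0)
    (h3 : At 2 = A 2) :
    A 0 = (lam * A 2 / 2) * (Real.cos (lam * A 2 / 2) / Real.sin (lam * A 2 / 2)) * At 0
        + (lam * A 2 / 2) * At 1 ∧
    A 1 = (lam * A 2 / 2) * (Real.cos (lam * A 2 / 2) / Real.sin (lam * A 2 / 2)) * At 1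
        - (lam * A 2 / 2) * At 0 := by
  have hx0 : lam * A 2 ≠ 0 := by
    intro h0; rw [h0] at h; simp at h
  have hs : Real.sin (lam * A 2) = 2 * Real.sin (lam * A 2 / 2) * Real.cos (lam * A 2 / 2) := by
    rw [← Real.sin_two_mul]; ring_nf
  rw [h1, h2, hs]
  constructor
  · field_simp
    rw [mul_div_cancel_left₀ _ hx0]
    linear_combination (-A 0) *
      Real.sin_sq_add_cos_sq (lam * A 2 / 2)
  · field_simp
    rw [mul_div_cancel_left₀ _ hx0]
    linear_combination (-A 1) *
      Real.sin_sq_add_cos_sq (lam * A 2 / 2)
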